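/- Let G be a connected graph with minimum degree at least k, and let γ_{k-1}^c(G) be the connected (k-1)-domination number of G. Then rx_k(G) ≤ γ_{k-1}^c(G) + k. -/

import Mathlib

open SimpleGraph

/-- An edge-coloring `c` is a `k`-rainbow coloring of `G` if every set of `k` vertices
is connected by a rainbow tree (here: a connected subgraph whose edges receive
pairwise distinct colors). -/
def IsKRainbowColoring {V : Type*} (G : SimpleGraph V) (k : ℕ) (c : Sym2 V → ℕ) : Prop :=
  ∀ S : Finset V, S.card = k →
    ∃ T : G.Subgraph, T.Connected ∧ ↑S ⊆ T.verts ∧ Set.InjOn c T.edgeSet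

/-- The `k`-rainbow index: minimum number of colors in a `k`-rainbow coloring. -/
noncomputable def rxk {V : Type*} (G : SimpleGraph V) (k : ℕ) : ℕ :=
  sInf {m | ∃ c : Sym2 V → ℕ, (∀ e ∈ G.edgeSet, c e < m) ∧ IsKRainbowColoring G k c}

/-- `D` is a connected `k`-dominating set of `G`. -/
def IsConnKDom {V : Type*} (G : SimpleGraph V) (k : ℕ) (D : Finset V) : Prop :=
  (G.induce (↑D : Set V)).Connected ∧
    ∀ v : V, v ∉ D → k ≤ ((↑D : Set V) ∩ G.neighborSet v).ncard

/-- The connected `k`-domination number. -/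
noncomputable def gammakc {V : Type*} (G : SimpleGraph V) (k : ℕ) : ℕ :=
  sInf {m | ∃ D : Finset V, D.card = m ∧ IsConnKDom G k D}


private lemma aux_inj_exists {α β : Type*} [Nonempty β] (P : Finset α) (N : Finset β)
    (h : P.card ≤ N.card) : ∃ f : α → β, Set.InjOn f ↑P ∧ ∀ a ∈ P, f a ∈ N := by
  classical
  let e1 := P.equivFin
  let e2 := N.equivFin
  refine ⟨fun a => if ha : a ∈ P then (e2.symm (Fin.castLE h (e1 ⟨a, ha⟩)) : β)
      else Classical.arbitrary β, ?_, ?_⟩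
  · intro a ha b hb hab
    rw [Finset.mem_coe] at ha hb
    dsimp only at hab
    rw [dif_pos ha, dif_pos hb] at hab
    have h2 := Subtype.coe_injective hab
    have h3 := e2.symm.injective h2
    have h4 := Fin.castLE_injective h h3
    have h5 := e1.injective h4
    exact congrArg Subtype.val h5
  · intro a ha
    dsimp only
    rw [dif_pos ha]
    exact (e2.symm _).2

private lemma aux_walk_crossing {α : Type*} {H : SimpleGraph α} (p : α → Prop) :
    ∀ {a b : α} (_ : H.Walk a b), p a → ¬ p b → ∃ x y, H.Adj x y ∧ p x ∧ ¬ p y := by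
  intro a b w
  induction w with
  | nil => intro h h'; exact absurd h h'
  | @cons u v w h q ih =>
    intro ha hb
    by_cases hm : p v
    · exact ih hm hb
    · exact ⟨u, v, h, ha, hm⟩

private lemma aux_exists_crossing {V : Type*} (G : SimpleGraph V) (D : Finset V)
    (hconn : (G.induce (↑D : Set V)).Connected) (C : Finset V) (hCD : C ⊆ D)
    (hC : C.Nonempty) (hne : ¬ D ⊆ C) :
    ∃ a ∈ C, ∃ b ∈ D, b ∉ C ∧ G.Adj a b := by
  obtain ⟨u, hu⟩ := hC
  rw [Finset.not_subset] at hne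
  obtain ⟨v, hvD, hvC⟩ := hne
  have hr := hconn.preconnected ⟨u, by simpa using hCD hu⟩ ⟨v, by simpa using hvD⟩
  obtain ⟨w⟩ := hr
  obtain ⟨x, y, hadj, hx, hy⟩ :=
    aux_walk_crossing (fun z : ↥(↑D : Set V) => (z : V) ∈ C) w hu hvC
  exact ⟨x, hx, y, by simpa using y.2, hy, hadj⟩

private lemma aux_verts_sup_finset {V α : Type*} {G : SimpleGraph V} [DecidableEq α]
    (s : Finset α) (p : α → G.Subgraph) (v : V) :
    v ∈ (s.sup p).verts ↔ ∃ a ∈ s, v ∈ (p a).verts := by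
  induction s using Finset.induction_on with
  | empty => simp [SimpleGraph.Subgraph.verts_bot]
  | @insert a s ha ih =>
    rw [Finset.sup_insert, SimpleGraph.Subgraph.verts_sup]
    simp only [Set.mem_union, ih, Finset.mem_insert]
    constructor
    · rintro (h | ⟨b, hb, hbv⟩)
      · exact ⟨a, Or.inl rfl, h⟩
      · exact ⟨b, Or.inr hb, hbv⟩
    · rintro ⟨b, (rfl | hb), hbv⟩
      · exact Or.inl hbv
      · exact Or.inr ⟨b, hb, hbv⟩

private lemma aux_edges_sup_finset {V α : Type*} {G : SimpleGraph V} [DecidableEq α]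
    (s : Finset α) (p : α → G.Subgraph) (e : Sym2 V) :
    e ∈ (s.sup p).edgeSet ↔ ∃ a ∈ s, e ∈ (p a).edgeSet := by
  induction s using Finset.induction_on with
  | empty => simp [SimpleGraph.Subgraph.edgeSet_bot]
  | @insert a s ha ih =>
    rw [Finset.sup_insert, SimpleGraph.Subgraph.edgeSet_sup]
    simp only [Set.mem_union, ih, Finset.mem_insert]
    constructor
    · rintro (h | ⟨b, hb, hbv⟩)
      · exact ⟨a, Or.inl rfl, h⟩
      · exact ⟨b, Or.inr hb, hbv⟩
    · rintro ⟨b, (rfl | hb), hbv⟩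
      · exact Or.inl hbv
      · exact Or.inr ⟨b, hb, hbv⟩

private lemma aux_conn_sup_finset {V α : Type*} {G : SimpleGraph V} [DecidableEq α]
    (s : Finset α) :
    ∀ (H : G.Subgraph), H.Connected → ∀ (p : α → G.Subgraph),
    (∀ a ∈ s, (p a).Connected) → (∀ a ∈ s, ((p a).verts ∩ H.verts).Nonempty) →
    (H ⊔ s.sup p).Connected := by
  induction s using Finset.induction_on with
  | empty => intro H hH p _ _; simpa using hH
  | @insert a s ha ih =>
    intro H hH p hc hi
    have h1 : (H ⊔ p a).Connected := by
      refine Subgraph.connected_sup hH.preconnected (hc a (Finset.mem_insert_self a s)).preconnected ?_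
      obtain ⟨x, hx1, hx2⟩ := hi a (Finset.mem_insert_self a s)
      exact ⟨x, by rw [SimpleGraph.Subgraph.verts_inf]; exact ⟨hx2, hx1⟩⟩
    have h2 := ih (H ⊔ p a) h1 p (fun b hb => hc b (Finset.mem_insert_of_mem hb))
      (fun b hb => by
        obtain ⟨x, hx1, hx2⟩ := hi b (Finset.mem_insert_of_mem hb)
        exact ⟨x, hx1, by rw [SimpleGraph.Subgraph.verts_sup]; exact Or.inl hx2⟩)
    rw [Finset.sup_insert, ← sup_assoc]
    exact h2

private lemma aux_exists_skeleton {V : Type*} [Fintype V] (G : SimpleGraph V) (D : Finset V)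
    (hconn : (G.induce (↑D : Set V)).Connected) (hne : D.Nonempty) :
    ∃ H : G.Subgraph, H.verts = ↑D ∧ H.Connected ∧
      ∃ f : Sym2 V → ℕ, Set.InjOn f H.edgeSet ∧ ∀ e ∈ H.edgeSet, f e < D.card - 1 := by
  classical
  obtain ⟨d, hd⟩ := hne
  suffices h : ∀ (n : ℕ) (C : Finset V), C ⊆ D → C.Nonempty → D.card - C.card = n →
      (∃ H : G.Subgraph, H.verts = ↑C ∧ H.Connected ∧
        ∃ f : Sym2 V → ℕ, Set.InjOn f H.edgeSet ∧ ∀ e ∈ H.edgeSet, f e < C.card - 1) →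
      (∃ H : G.Subgraph, H.verts = ↑D ∧ H.Connected ∧
        ∃ f : Sym2 V → ℕ, Set.InjOn f H.edgeSet ∧ ∀ e ∈ H.edgeSet, f e < D.card - 1) by
    refine h (D.card - 1) {d} (by simpa using hd) ⟨d, Finset.mem_singleton_self d⟩
      (by simp) ?_
    refine ⟨G.singletonSubgraph d, by simp, Subgraph.singletonSubgraph_connected, fun _ => 0, ?_, ?_⟩
    · rw [edgeSet_singletonSubgraph]; exact fun x hx => absurd hx (Set.notMem_empty x)
    · rw [edgeSet_singletonSubgraph]; exact fun e he => absurd he (Set.notMem_empty e)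
  intro n
  induction n with
  | zero =>
    intro C hCD hC hcard h
    have hcle := Finset.card_le_card hCD
    have : C = D := Finset.eq_of_subset_of_card_le hCD (by omega)
    rwa [this] at h
  | succ n ih =>
    intro C hCD hC hcard h
    obtain ⟨H, hv, hconnH, f, hinj, hbound⟩ := h
    have hcle := Finset.card_le_card hCD
    have hC1 : 1 ≤ C.card := Finset.card_pos.2 hC
    have hne2 : ¬ D ⊆ C := by
      intro hsub
      have := Finset.card_le_card hsub
      omega
    obtain ⟨a, haC, b, hbD, hbC, hadj⟩ := aux_exists_crossing G D hconn C hCD hC hne2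
    have hbH : b ∉ H.verts := by rw [hv]; simpa using hbC
    have hnew : s(a, b) ∉ H.edgeSet := fun he =>
      hbH (H.mem_verts_of_mem_edge he (Sym2.mem_mk_right a b))
    have hcardins : (insert b C).card = C.card + 1 := Finset.card_insert_of_notMem hbC
    have hinsD : insert b C ⊆ D := Finset.insert_subset hbD hCD
    have hinscard := Finset.card_le_card hinsD
    refine ih (insert b C) hinsD ⟨b, Finset.mem_insert_self b C⟩ (by omega) ?_
    refine ⟨H ⊔ G.subgraphOfAdj hadj, ?_, ?_,
      fun e => if e = s(a, b) then C.card - 1 else f e, ?_, ?_⟩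
    · rw [SimpleGraph.Subgraph.verts_sup, hv, subgraphOfAdj_verts]
      ext x
      simp only [Set.mem_union, Finset.coe_insert, Set.mem_insert_iff, Finset.mem_coe,
        Set.mem_singleton_iff]
      constructor
      · rintro (hx | rfl | rfl)
        · exact Or.inr hx
        · exact Or.inr haC
        · exact Or.inl rfl
      · rintro (rfl | hx)
        · exact Or.inr (Or.inr rfl)
        · exact Or.inl hx
    · refine Subgraph.connected_sup hconnH.preconnected (Subgraph.subgraphOfAdj_connected hadj).preconnected ⟨a, ?_⟩
      rw [SimpleGraph.Subgraph.verts_inf, hv]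
      exact ⟨by simpa using haC, by simp⟩
    · intro e1 h1 e2 h2 hq
      rw [SimpleGraph.Subgraph.edgeSet_sup, edgeSet_subgraphOfAdj] at h1 h2
      dsimp only at hq
      rcases h1 with h1 | h1
      · rcases h2 with h2 | h2
        · rw [if_neg (fun hh : e1 = s(a,b) => hnew (hh ▸ h1)), if_neg (fun hh : e2 = s(a,b) => hnew (hh ▸ h2))] at hq
          exact hinj h1 h2 hq
        · rw [Set.mem_singleton_iff] at h2
          rw [if_neg (fun hh : e1 = s(a,b) => hnew (hh ▸ h1)), h2, if_pos rfl] at hq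
          have := hbound e1 h1
          omega
      · rw [Set.mem_singleton_iff] at h1
        rcases h2 with h2 | h2
        · rw [h1, if_pos rfl, if_neg (fun hh : e2 = s(a,b) => hnew (hh ▸ h2))] at hq
          have := hbound e2 h2
          omega
        · rw [Set.mem_singleton_iff] at h2
          rw [h1, h2]
    · intro e he
      rw [SimpleGraph.Subgraph.edgeSet_sup, edgeSet_subgraphOfAdj] at he
      dsimp only
      rcases he with he | he
      · rw [if_neg (fun hh : e = s(a,b) => hnew (hh ▸ he))]
        have := hbound e he
        omega
      · rw [Set.mem_singleton_iff] at he
        rw [if_pos he]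
        omega

set_option maxHeartbeats 2000000 in
theorem stmt11 {V : Type*} [Fintype V] (G : SimpleGraph V) (hG : G.Connected)
    (k : ℕ) (hk : 2 ≤ k)
    (hδ : ∀ v : V, k ≤ (G.neighborSet v).ncard)
    (hex : ∃ D : Finset V, IsConnKDom G (k - 1) D) :
    rxk G k ≤ gammakc G (k - 1) + k := by
  classical
  have hVne : Nonempty V := hG.nonempty
  have hset : {m | ∃ D : Finset V, D.card = m ∧ IsConnKDom G (k - 1) D}.Nonempty := by
    obtain ⟨D, hD⟩ := hex; exact ⟨D.card, D, rfl, hD⟩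
  have hmm : ∃ D : Finset V, D.card = gammakc G (k - 1) ∧ IsConnKDom G (k - 1) D :=
    Nat.sInf_mem hset
  obtain ⟨D, hDcard, hDconn, hDdom⟩ := hmm
  have hDne : D.Nonempty := by
    obtain ⟨⟨d, hd⟩⟩ := hDconn.nonempty
    exact ⟨d, by simpa using hd⟩
  have hγ : 1 ≤ D.card := Finset.card_pos.2 hDne
  obtain ⟨HD, hHDverts, hHDconn, f, hfinj, hfbound⟩ := aux_exists_skeleton G D hDconn hDne
  -- maximal independent set among deficient vertices
  set fam : Set (Finset V) := {J : Finset V |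
      (∀ v ∈ J, v ∉ D ∧ ¬ k ≤ ((↑D : Set V) ∩ G.neighborSet v).ncard) ∧
      ∀ v ∈ J, ∀ u ∈ J, ¬ G.Adj v u} with hfam_def
  obtain ⟨I, hIfam, hImax⟩ : ∃ I ∈ fam, ∀ J ∈ fam, id I ≤ id J → id I = id J := by
    obtain ⟨I, h1, h2⟩ := (Set.toFinite fam).exists_maximalFor id fam
      ⟨∅, by simp [hfam_def], by simp [hfam_def]⟩
    exact ⟨I, h1, fun J hJ hle => le_antisymm hle (h2 hJ hle)⟩
  obtain ⟨hImem, hIind⟩ := hIfam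
  have hI3 : ∀ v, v ∉ D → ¬ (k ≤ ((↑D : Set V) ∩ G.neighborSet v).ncard) → v ∉ I →
      ∃ u ∈ I, G.Adj v u := by
    intro v hv hnr hvI
    by_contra hcon
    push_neg at hcon
    have hJ : (insert v I) ∈ fam := by
      constructor
      · intro w hw
        rcases Finset.mem_insert.1 hw with rfl | hw
        · exact ⟨hv, hnr⟩
        · exact hImem w hw
      · intro w hw u hu h
        rcases Finset.mem_insert.1 hw with hw' | hw' <;> rcases Finset.mem_insert.1 hu with hu' | hu'
        · exact G.irrefl (hw' ▸ hu' ▸ h)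
        · exact hcon u hu' (hw' ▸ h)
        · exact hcon w hw' (hu' ▸ h).symm
        · exact hIind w hw' u hu' h
    have heq := hImax _ hJ (by simpa using Finset.subset_insert v I)
    rw [id_eq, id_eq] at heq
    exact hvI (by rw [heq]; exact Finset.mem_insert_self v I)
  -- palettes
  set pal : V → Finset ℕ := fun v =>
    if k ≤ ((↑D : Set V) ∩ G.neighborSet v).ncard then Finset.Ico (D.card - 1) (D.card + k - 1)
    else if v ∈ I then Finset.Ico (D.card - 1) (D.card + k - 2)
    else Finset.Ico D.card (D.card + k - 1) with hpal_def
  have hpal_mem : ∀ v, ∀ t ∈ pal v, D.card - 1 ≤ t ∧ t < D.card + k - 1 := by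
    intro v t ht
    rw [hpal_def] at ht; dsimp only at ht
    split_ifs at ht <;> rw [Finset.mem_Ico] at ht <;> omega
  have hpal_card : ∀ v, v ∉ D →
      (pal v).card ≤ ((↑D : Set V) ∩ G.neighborSet v).ncard ∧ k - 1 ≤ (pal v).card := by
    intro v hv
    have hdom := hDdom v hv
    rw [hpal_def]; dsimp only
    split_ifs with h1 h2 <;> rw [Nat.card_Ico] <;> constructor <;> omega
  have hpalR : ∀ v, k ≤ ((↑D : Set V) ∩ G.neighborSet v).ncard →
      pal v = Finset.Ico (D.card - 1) (D.card + k - 1) := by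
    intro v hv; rw [hpal_def]; dsimp only; rw [if_pos hv]
  have hpalA : ∀ v, ¬ k ≤ ((↑D : Set V) ∩ G.neighborSet v).ncard → v ∈ I →
      pal v = Finset.Ico (D.card - 1) (D.card + k - 2) := by
    intro v hv hvI; rw [hpal_def]; dsimp only; rw [if_neg hv, if_pos hvI]
  have hpalB : ∀ v, ¬ k ≤ ((↑D : Set V) ∩ G.neighborSet v).ncard → v ∉ I →
      pal v = Finset.Ico D.card (D.card + k - 1) := by
    intro v hv hvI; rw [hpal_def]; dsimp only; rw [if_neg hv, if_neg hvI]
  -- attachment functions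
  have hgex : ∀ v : V, ∃ gv : ℕ → V, v ∉ D → (Set.InjOn gv ↑(pal v) ∧
      ∀ t ∈ pal v, gv t ∈ ((↑D : Set V) ∩ G.neighborSet v)) := by
    intro v
    by_cases hv : v ∉ D
    · have hfin : ((↑D : Set V) ∩ G.neighborSet v).Finite := Set.toFinite _
      have hcard : (pal v).card ≤ hfin.toFinset.card := by
        rw [← Set.ncard_eq_toFinset_card _ hfin]
        exact (hpal_card v hv).1
      obtain ⟨gv, h1, h2⟩ := aux_inj_exists (pal v) hfin.toFinset hcard
      exact ⟨gv, fun _ => ⟨h1, fun t ht => hfin.mem_toFinset.1 (h2 t ht)⟩⟩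
    · exact ⟨fun _ => Classical.arbitrary V, fun h => (hv h).elim⟩
  choose g hg using hgex
  -- the coloring
  set c : Sym2 V → ℕ := fun e =>
    if e ∈ HD.edgeSet then f e
    else if h : ∃ p : V × ℕ, p.1 ∉ D ∧ p.2 ∈ pal p.1 ∧ e = s(p.1, g p.1 p.2) then h.choose.2
    else D.card + k - 1 with hc_def
  have hcF : ∀ e ∈ HD.edgeSet, c e = f e := by
    intro e he; rw [hc_def]; dsimp only; rw [if_pos he]
  have hcatt : ∀ v, v ∉ D → ∀ t ∈ pal v,
      g v t ∈ D ∧ G.Adj v (g v t) ∧ c s(v, g v t) = t := by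
    intro v hv t ht
    obtain ⟨hgi, hgm⟩ := hg v hv
    have hmemD : g v t ∈ D := by simpa using (hgm t ht).1
    have hadj : G.Adj v (g v t) := (hgm t ht).2
    refine ⟨hmemD, hadj, ?_⟩
    have h1 : s(v, g v t) ∉ HD.edgeSet := by
      intro he
      have h2 := HD.mem_verts_of_mem_edge he (Sym2.mem_mk_left _ _)
      rw [hHDverts] at h2
      exact hv (by simpa using h2)
    have hex2 : ∃ p : V × ℕ, p.1 ∉ D ∧ p.2 ∈ pal p.1 ∧ s(v, g v t) = s(p.1, g p.1 p.2) :=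
      ⟨(v, t), hv, ht, rfl⟩
    rw [hc_def]; dsimp only
    rw [if_neg h1, dif_pos hex2]
    obtain ⟨hp1, hp2, hp3⟩ := hex2.choose_spec
    rw [Sym2.eq_iff] at hp3
    rcases hp3 with ⟨h4, h5⟩ | ⟨h4, h5⟩
    · rw [← h4] at hp2 h5
      exact (hgi (Finset.mem_coe.2 ht) (Finset.mem_coe.2 hp2) h5).symm
    · exfalso
      have h6 := ((hg _ hp1).2 _ hp2).1
      exact hv (by rw [h4]; simpa using h6)
  have hcout : ∀ a b : V, a ∉ D → b ∉ D → c s(a, b) = D.card + k - 1 := by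
    intro a b ha hb
    rw [hc_def]; dsimp only
    have h1 : s(a, b) ∉ HD.edgeSet := by
      intro he
      have h2 := HD.mem_verts_of_mem_edge he (Sym2.mem_mk_left _ _)
      rw [hHDverts] at h2
      exact ha (by simpa using h2)
    rw [if_neg h1]
    have h2 : ¬ ∃ p : V × ℕ, p.1 ∉ D ∧ p.2 ∈ pal p.1 ∧ s(a, b) = s(p.1, g p.1 p.2) := by
      rintro ⟨p, hp1, hp2, hp3⟩
      have hd : g p.1 p.2 ∈ D := by simpa using ((hg _ hp1).2 _ hp2).1
      rw [Sym2.eq_iff] at hp3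
      rcases hp3 with ⟨h4, h5⟩ | ⟨h4, h5⟩
      · exact hb (h5 ▸ hd)
      · exact ha (h4 ▸ hd)
    rw [dif_neg h2]
  have hcbound : ∀ e, c e < D.card + k := by
    intro e
    rw [hc_def]; dsimp only
    split_ifs with h1 h2
    · have := hfbound e h1; omega
    · obtain ⟨hp1, hp2, hp3⟩ := h2.choose_spec
      have := hpal_mem _ _ hp2
      omega
    · omega
  -- Hall-type selection
  have hall : ∀ A : Finset V, (∀ v ∈ A, v ∉ D) → A.card ≤ k →
      (A.card ≤ k - 1 ∨ (∃ u ∈ A, k ≤ ((↑D : Set V) ∩ G.neighborSet u).ncard) ∨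
        ((∃ u ∈ A, u ∈ I) ∧ (∃ u ∈ A, u ∉ I))) →
      ∃ ψ : V → ℕ, Set.InjOn ψ ↑A ∧ ∀ v ∈ A, ψ v ∈ pal v := by
    intro A hAD hAk hdisj
    have hhall : ∀ s : Finset {x // x ∈ A}, s.card ≤ (s.biUnion (fun x => pal ↑x)).card := by
      intro s
      rcases s.eq_empty_or_nonempty with rfl | ⟨a, ha⟩
      · simp
      · have hsub1 : pal ↑a ⊆ s.biUnion (fun x => pal ↑x) :=
          fun t ht => Finset.mem_biUnion.2 ⟨a, ha, ht⟩
        have hc1 : k - 1 ≤ (s.biUnion (fun x => pal ↑x)).card :=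
          le_trans (hpal_card ↑a (hAD _ a.2)).2 (Finset.card_le_card hsub1)
        by_cases hsk : s.card ≤ k - 1
        · omega
        · have hsA : s.card ≤ A.card := by
            have := Finset.card_le_univ s
            rwa [Fintype.card_coe] at this
          have hsuniv : s = Finset.univ :=
            Finset.eq_univ_of_card s (by rw [Fintype.card_coe]; omega)
          have hfullcard : (Finset.Ico (D.card - 1) (D.card + k - 1)).card = k := by
            rw [Nat.card_Ico]; omega
          have hfull : Finset.Ico (D.card - 1) (D.card + k - 1) ⊆
              s.biUnion (fun x => pal ↑x) := by
            rcases hdisj with h | h | ⟨⟨u1, hu1, hu1I⟩, ⟨u2, hu2, hu2I⟩⟩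
            · omega
            · obtain ⟨u, hu, hur⟩ := h
              have hpu : pal u = Finset.Ico (D.card - 1) (D.card + k - 1) := hpalR u hur
              intro t ht
              exact Finset.mem_biUnion.2 ⟨⟨u, hu⟩, by rw [hsuniv]; exact Finset.mem_univ _,
                by rw [hpu]; exact ht⟩
            · intro t ht
              rw [Finset.mem_Ico] at ht
              by_cases htt : t < D.card + k - 2
              · refine Finset.mem_biUnion.2 ⟨⟨u1, hu1⟩, by rw [hsuniv]; exact Finset.mem_univ _, ?_⟩
                by_cases hr1 : k ≤ ((↑D : Set V) ∩ G.neighborSet u1).ncard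
                · rw [hpalR u1 hr1, Finset.mem_Ico]; omega
                · rw [hpalA u1 hr1 hu1I, Finset.mem_Ico]; omega
              · refine Finset.mem_biUnion.2 ⟨⟨u2, hu2⟩, by rw [hsuniv]; exact Finset.mem_univ _, ?_⟩
                by_cases hr1 : k ≤ ((↑D : Set V) ∩ G.neighborSet u2).ncard
                · rw [hpalR u2 hr1, Finset.mem_Ico]; omega
                · rw [hpalB u2 hr1 hu2I, Finset.mem_Ico]; omega
          have hk2 : k ≤ (s.biUnion (fun x => pal ↑x)).card := by
            rw [← hfullcard]
            exact Finset.card_le_card hfull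
          omega
    obtain ⟨ψ0, hψ0inj, hψ0mem⟩ :=
      (Finset.all_card_le_biUnion_card_iff_exists_injective (fun x : {x // x ∈ A} => pal ↑x)).1 hhall
    refine ⟨fun v => if h : v ∈ A then ψ0 ⟨v, h⟩ else 0, ?_, ?_⟩
    · intro a ha b hb hab
      rw [Finset.mem_coe] at ha hb
      dsimp only at hab
      rw [dif_pos ha, dif_pos hb] at hab
      exact congrArg Subtype.val (hψ0inj hab)
    · intro v hv
      dsimp only
      rw [dif_pos hv]
      exact hψ0mem ⟨v, hv⟩
  -- escape neighbor
  have hout : ∀ v, v ∉ D → ¬ (k ≤ ((↑D : Set V) ∩ G.neighborSet v).ncard) →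
      ∃ x, G.Adj v x ∧ x ∉ D := by
    intro v hv hnr
    by_contra h
    push_neg at h
    have hsub : G.neighborSet v ⊆ (↑D : Set V) ∩ G.neighborSet v :=
      fun x hx => ⟨by simpa using h x hx, hx⟩
    have h1 := Set.ncard_le_ncard hsub (Set.toFinite _)
    have h2 := hδ v
    omega
  -- the rainbow property
  have hrainbow : IsKRainbowColoring G k c := by
    intro S hS
    set Sout : Finset V := S \ D with hSout_def
    have hSoutD : ∀ v ∈ Sout, v ∉ D := fun v hv => (Finset.mem_sdiff.1 hv).2
    have hSoutS : ∀ v ∈ Sout, v ∈ S := fun v hv => (Finset.mem_sdiff.1 hv).1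
    have hSoutcard : Sout.card ≤ k := le_trans (Finset.card_le_card Finset.sdiff_subset) hS.le
    by_cases hbad : Sout.card = k ∧
        (∀ v ∈ Sout, ¬ k ≤ ((↑D : Set V) ∩ G.neighborSet v).ncard) ∧
        ((∀ v ∈ Sout, v ∈ I) ∨ (∀ v ∈ Sout, v ∉ I))
    · -- bad case
      obtain ⟨hcard_k, hnorich, htyp⟩ := hbad
      have hSne : Sout.Nonempty := Finset.card_pos.1 (by omega)
      obtain ⟨s₁, hs₁⟩ := hSne
      have hs₁D : s₁ ∉ D := hSoutD s₁ hs₁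
      have hs₁nr : ¬ k ≤ ((↑D : Set V) ∩ G.neighborSet s₁).ncard := hnorich s₁ hs₁
      obtain ⟨x, hxD, hadj1, esc, hescpal, P, hPeq, hescP⟩ :
          ∃ x, x ∉ D ∧ G.Adj s₁ x ∧ ∃ esc, esc ∈ pal x ∧ ∃ P : Finset ℕ,
            (∀ v ∈ Sout, pal v = P) ∧ esc ∉ P := by
        rcases htyp with hall_I | hall_nI
        · obtain ⟨x, hadjx, hxD⟩ := hout s₁ hs₁D hs₁nr
          refine ⟨x, hxD, hadjx, D.card + k - 2, ?_,
            Finset.Ico (D.card - 1) (D.card + k - 2), ?_, ?_⟩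
          · by_cases hrx : k ≤ ((↑D : Set V) ∩ G.neighborSet x).ncard
            · rw [hpalR x hrx, Finset.mem_Ico]; omega
            · have hxI : x ∉ I := by
                intro hxI
                exact hIind s₁ (hall_I s₁ hs₁) x hxI hadjx
              rw [hpalB x hrx hxI, Finset.mem_Ico]; omega
          · intro v hv
            exact hpalA v (hnorich v hv) (hall_I v hv)
          · rw [Finset.mem_Ico]; omega
        · obtain ⟨x, hxI, hadjx⟩ := hI3 s₁ hs₁D hs₁nr (hall_nI s₁ hs₁)
          obtain ⟨hxD, hxnr⟩ := hImem x hxI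
          refine ⟨x, hxD, hadjx, D.card - 1, ?_,
            Finset.Ico D.card (D.card + k - 1), ?_, ?_⟩
          · rw [hpalA x hxnr hxI, Finset.mem_Ico]; omega
          · intro v hv
            exact hpalB v (hnorich v hv) (hall_nI v hv)
          · rw [Finset.mem_Ico]; omega
      have herase_sub : ∀ v ∈ Sout.erase s₁, v ∈ Sout := fun v hv => Finset.mem_of_mem_erase hv
      have hercard : (Sout.erase s₁).card = k - 1 := by
        rw [Finset.card_erase_of_mem hs₁]; omega
      obtain ⟨ψ, hψinj, hψpal⟩ := hall (Sout.erase s₁)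
        (fun v hv => hSoutD v (herase_sub v hv)) (by omega) (Or.inl (by omega))
      have hW : ∀ v ∈ Sout.erase s₁,
          g v (ψ v) ∈ D ∧ G.Adj v (g v (ψ v)) ∧ c s(v, g v (ψ v)) = ψ v :=
        fun v hv => hcatt v (hSoutD v (herase_sub v hv)) (ψ v) (hψpal v hv)
      have hψP : ∀ v ∈ Sout.erase s₁, ψ v ∈ P := by
        intro v hv
        have := hψpal v hv
        rwa [hPeq v (herase_sub v hv)] at this
      obtain ⟨hwxD, hwxadj, hwxc⟩ := hcatt x hxD esc hescpal
      set piece : {y // y ∈ Sout.erase s₁} → G.Subgraph :=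
        fun y => G.subgraphOfAdj (hW y.1 y.2).2.1 with hpiece
      refine ⟨((HD ⊔ G.subgraphOfAdj hwxadj) ⊔ G.subgraphOfAdj hadj1) ⊔ Finset.univ.sup piece,
        ?_, ?_, ?_⟩
      · have h1 : (HD ⊔ G.subgraphOfAdj hwxadj).Connected := by
          refine Subgraph.connected_sup hHDconn.preconnected (Subgraph.subgraphOfAdj_connected _).preconnected ⟨g x esc, ?_⟩
          rw [SimpleGraph.Subgraph.verts_inf, hHDverts]
          exact ⟨by exact_mod_cast hwxD, by rw [subgraphOfAdj_verts]; exact Or.inr rfl⟩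
        have h2 : ((HD ⊔ G.subgraphOfAdj hwxadj) ⊔ G.subgraphOfAdj hadj1).Connected := by
          refine Subgraph.connected_sup h1.preconnected (Subgraph.subgraphOfAdj_connected _).preconnected ⟨x, ?_⟩
          rw [SimpleGraph.Subgraph.verts_inf]
          constructor
          · rw [SimpleGraph.Subgraph.verts_sup]
            exact Or.inr (by rw [subgraphOfAdj_verts]; exact Or.inl rfl)
          · rw [subgraphOfAdj_verts]; exact Or.inr rfl
        refine aux_conn_sup_finset _ _ h2 piece
          (fun a _ => Subgraph.subgraphOfAdj_connected _) ?_
        intro a _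
        refine ⟨g a.1 (ψ a.1), ?_, ?_⟩
        · rw [hpiece]; dsimp only; rw [subgraphOfAdj_verts]; exact Or.inr rfl
        · rw [SimpleGraph.Subgraph.verts_sup]; left
          rw [SimpleGraph.Subgraph.verts_sup]; left
          rw [hHDverts]
          exact_mod_cast (hW a.1 a.2).1
      · intro v hvS
        have hvS' : v ∈ S := hvS
        rw [SimpleGraph.Subgraph.verts_sup, SimpleGraph.Subgraph.verts_sup,
          SimpleGraph.Subgraph.verts_sup]
        by_cases hvD : v ∈ D
        · exact Or.inl (Or.inl (Or.inl (by rw [hHDverts]; exact_mod_cast hvD)))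
        · have hvout : v ∈ Sout := Finset.mem_sdiff.2 ⟨hvS', hvD⟩
          by_cases hvs₁ : v = s₁
          · subst hvs₁
            exact Or.inl (Or.inr (by rw [subgraphOfAdj_verts]; exact Or.inl rfl))
          · have hver : v ∈ Sout.erase s₁ := Finset.mem_erase.2 ⟨hvs₁, hvout⟩
            refine Or.inr ((aux_verts_sup_finset _ _ _).2 ⟨⟨v, hver⟩, Finset.mem_univ _, ?_⟩)
            rw [hpiece]; dsimp only; rw [subgraphOfAdj_verts]; exact Or.inl rfl
      · intro e1 h1 e2 h2 hc12
        have key : ∀ e, e ∈ (((HD ⊔ G.subgraphOfAdj hwxadj) ⊔ G.subgraphOfAdj hadj1) ⊔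
              Finset.univ.sup piece).edgeSet →
            e ∈ HD.edgeSet ∨ e = s(x, g x esc) ∨ e = s(s₁, x) ∨
              ∃ y : {y // y ∈ Sout.erase s₁}, e = s(y.1, g y.1 (ψ y.1)) := by
          intro e he
          rw [SimpleGraph.Subgraph.edgeSet_sup, SimpleGraph.Subgraph.edgeSet_sup,
            SimpleGraph.Subgraph.edgeSet_sup] at he
          rcases he with ((he | he) | he) | he
          · exact Or.inl he
          · rw [edgeSet_subgraphOfAdj, Set.mem_singleton_iff] at he
            exact Or.inr (Or.inl he)
          · rw [edgeSet_subgraphOfAdj, Set.mem_singleton_iff] at he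
            exact Or.inr (Or.inr (Or.inl he))
          · obtain ⟨a, _, ha⟩ := (aux_edges_sup_finset _ _ _).1 he
            rw [hpiece] at ha; dsimp only at ha
            rw [edgeSet_subgraphOfAdj, Set.mem_singleton_iff] at ha
            exact Or.inr (Or.inr (Or.inr ⟨a, ha⟩))
        have hesc_lb := (hpal_mem x esc hescpal).1
        have hesc_ub := (hpal_mem x esc hescpal).2
        have hce : c s(s₁, x) = D.card + k - 1 := hcout s₁ x hs₁D hxD
        rcases key e1 h1 with k1 | rfl | rfl | ⟨y1, rfl⟩ <;>
          rcases key e2 h2 with k2 | rfl | rfl | ⟨y2, rfl⟩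
        · rw [hcF e1 k1, hcF e2 k2] at hc12; exact hfinj k1 k2 hc12
        · rw [hcF e1 k1, hwxc] at hc12; have := hfbound e1 k1; omega
        · rw [hcF e1 k1, hce] at hc12; have := hfbound e1 k1; omega
        · rw [hcF e1 k1, (hW y2.1 y2.2).2.2] at hc12
          have := hfbound e1 k1
          have := (hpal_mem y2.1 _ (hψpal y2.1 y2.2)).1
          omega
        · rw [hcF e2 k2, hwxc] at hc12; have := hfbound e2 k2; omega
        · rfl
        · rw [hwxc, hce] at hc12; omega
        · rw [hwxc, (hW y2.1 y2.2).2.2] at hc12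
          have hm := hψP y2.1 y2.2
          rw [← hc12] at hm
          exact absurd hm hescP
        · rw [hcF e2 k2, hce] at hc12; have := hfbound e2 k2; omega
        · rw [hwxc, hce] at hc12; omega
        · rfl
        · rw [hce, (hW y2.1 y2.2).2.2] at hc12
          have := (hpal_mem y2.1 _ (hψpal y2.1 y2.2)).2
          omega
        · rw [hcF e2 k2, (hW y1.1 y1.2).2.2] at hc12
          have := hfbound e2 k2
          have := (hpal_mem y1.1 _ (hψpal y1.1 y1.2)).1
          omega
        · rw [hwxc, (hW y1.1 y1.2).2.2] at hc12
          have hm := hψP y1.1 y1.2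
          rw [hc12] at hm
          exact absurd hm hescP
        · rw [hce, (hW y1.1 y1.2).2.2] at hc12
          have := (hpal_mem y1.1 _ (hψpal y1.1 y1.2)).2
          omega
        · rw [(hW y1.1 y1.2).2.2, (hW y2.1 y2.2).2.2] at hc12
          have heq := hψinj (Finset.mem_coe.2 y1.2) (Finset.mem_coe.2 y2.2) hc12
          rw [heq]
    · -- main case
      have hdisj : Sout.card ≤ k - 1 ∨
          (∃ u ∈ Sout, k ≤ ((↑D : Set V) ∩ G.neighborSet u).ncard) ∨
          ((∃ u ∈ Sout, u ∈ I) ∧ (∃ u ∈ Sout, u ∉ I)) := by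
        by_cases h1 : Sout.card = k
        · right
          by_cases h2 : ∃ u ∈ Sout, k ≤ ((↑D : Set V) ∩ G.neighborSet u).ncard
          · exact Or.inl h2
          · right
            have h2' : ∀ v ∈ Sout, ¬ k ≤ ((↑D : Set V) ∩ G.neighborSet v).ncard :=
              fun v hv hc => h2 ⟨v, hv, hc⟩
            have h3 : ¬ ((∀ v ∈ Sout, v ∈ I) ∨ (∀ v ∈ Sout, v ∉ I)) :=
              fun hcon => hbad ⟨h1, h2', hcon⟩
            push_neg at h3
            obtain ⟨⟨u2, hu2, hu2I⟩, ⟨u1, hu1, hu1I⟩⟩ := h3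
            exact ⟨⟨u1, hu1, hu1I⟩, ⟨u2, hu2, hu2I⟩⟩
        · left; omega
      obtain ⟨ψ, hψinj, hψpal⟩ := hall Sout hSoutD hSoutcard hdisj
      have hW : ∀ v ∈ Sout, g v (ψ v) ∈ D ∧ G.Adj v (g v (ψ v)) ∧ c s(v, g v (ψ v)) = ψ v :=
        fun v hv => hcatt v (hSoutD v hv) (ψ v) (hψpal v hv)
      set piece : {y // y ∈ Sout} → G.Subgraph :=
        fun y => G.subgraphOfAdj (hW y.1 y.2).2.1 with hpiece
      refine ⟨HD ⊔ Finset.univ.sup piece, ?_, ?_, ?_⟩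
      · refine aux_conn_sup_finset _ HD hHDconn piece
          (fun a _ => Subgraph.subgraphOfAdj_connected _) ?_
        intro a _
        refine ⟨g a.1 (ψ a.1), ?_, ?_⟩
        · rw [hpiece]; dsimp only; rw [subgraphOfAdj_verts]; exact Or.inr rfl
        · rw [hHDverts]; exact_mod_cast (hW a.1 a.2).1
      · intro v hvS
        have hvS' : v ∈ S := hvS
        rw [SimpleGraph.Subgraph.verts_sup]
        by_cases hvD : v ∈ D
        · exact Or.inl (by rw [hHDverts]; exact_mod_cast hvD)
        · have hvout : v ∈ Sout := Finset.mem_sdiff.2 ⟨hvS', hvD⟩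
          refine Or.inr ((aux_verts_sup_finset _ _ _).2 ⟨⟨v, hvout⟩, Finset.mem_univ _, ?_⟩)
          rw [hpiece]; dsimp only; rw [subgraphOfAdj_verts]; exact Or.inl rfl
      · intro e1 h1 e2 h2 hc12
        have key : ∀ e, e ∈ (HD ⊔ Finset.univ.sup piece).edgeSet →
            e ∈ HD.edgeSet ∨ ∃ y : {y // y ∈ Sout}, e = s(y.1, g y.1 (ψ y.1)) := by
          intro e he
          rw [SimpleGraph.Subgraph.edgeSet_sup] at he
          rcases he with he | he
          · exact Or.inl he
          · obtain ⟨a, _, ha⟩ := (aux_edges_sup_finset _ _ _).1 he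
            rw [hpiece] at ha; dsimp only at ha
            rw [edgeSet_subgraphOfAdj, Set.mem_singleton_iff] at ha
            exact Or.inr ⟨a, ha⟩
        rcases key e1 h1 with k1 | ⟨y1, rfl⟩ <;> rcases key e2 h2 with k2 | ⟨y2, rfl⟩
        · rw [hcF e1 k1, hcF e2 k2] at hc12; exact hfinj k1 k2 hc12
        · rw [hcF e1 k1, (hW y2.1 y2.2).2.2] at hc12
          have := hfbound e1 k1
          have := (hpal_mem y2.1 _ (hψpal y2.1 y2.2)).1
          omega
        · rw [hcF e2 k2, (hW y1.1 y1.2).2.2] at hc12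
          have := hfbound e2 k2
          have := (hpal_mem y1.1 _ (hψpal y1.1 y1.2)).1
          omega
        · rw [(hW y1.1 y1.2).2.2, (hW y2.1 y2.2).2.2] at hc12
          have heq := hψinj (Finset.mem_coe.2 y1.2) (Finset.mem_coe.2 y2.2) hc12
          rw [heq]
  have hmemfin : gammakc G (k - 1) + k ∈
      {m | ∃ c : Sym2 V → ℕ, (∀ e ∈ G.edgeSet, c e < m) ∧ IsKRainbowColoring G k c} :=
    ⟨c, fun e _ => by rw [← hDcard]; exact hcbound e, hrainbow⟩
  exact Nat.sInf_le hmemfin
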